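/- In G_1 (presented as above), the subgroup generated by a'_0·a''_0 is normal, infinite cyclic, and has index 4 in G_1. -/

import Mathlib

open FreeGroup

/-- Generators of the groups `G_m` and `G̃_m`: `.inl (i, false)` is `a'_i`,
`.inl (i, true)` is `a''_i`, and `.inr ()` is `a_m`. -/
abbrev Gen (m : ℕ) := (Fin m × Bool) ⊕ Unit

/-- The defining relators of the group `G_m`. -/
def Gm.rels (m : ℕ) : Set (FreeGroup (Gen m)) :=
  {w | (∃ i : Fin m, ∃ t : Bool, w = of (.inl (i, t)) * of (.inl (i, t)))
    ∨ w = of (.inr ()) * of (.inr ())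
    ∨ (∃ i j : Fin m, i < j ∧
        (w = of (.inl (i, false)) * of (.inl (j, false)) *
             (of (.inl (j, false)) * of (.inl (i, true)))⁻¹
       ∨ w = of (.inl (i, false)) * of (.inl (j, true)) *
             (of (.inl (j, true)) * of (.inl (i, true)))⁻¹))
    ∨ (∃ i : Fin m, w = of (.inl (i, false)) * of (.inr ()) *
             (of (.inr ()) * of (.inl (i, true)))⁻¹)}

/-- The group `G_m`. -/
abbrev Gm (m : ℕ) := PresentedGroup (Gm.rels m)

def Gm.a' {m : ℕ} (i : Fin m) : Gm m := PresentedGroup.of (.inl (i, false))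
def Gm.a'' {m : ℕ} (i : Fin m) : Gm m := PresentedGroup.of (.inl (i, true))
def Gm.am (m : ℕ) : Gm m := PresentedGroup.of (.inr ())

namespace Stmt2Aux

open DihedralGroup Subgroup

abbrev D := DihedralGroup 0

def zmk : ℤ → ZMod 0 := fun k => k
def zi : ZMod 0 → ℤ := fun i => i

lemma zmk_zero : zmk 0 = 0 := rfl

lemma inv_r (i : ZMod 0) : (r i : D)⁻¹ = r (-i) := rfl
lemma inv_sr (i : ZMod 0) : (sr i : D)⁻¹ = sr i := rfl

lemma r_zpow (i : ZMod 0) (k : ℤ) : (r i : D) ^ k = r (i * zmk k) := by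
  induction k using Int.induction_on with
  | zero => rw [zmk_zero, mul_zero, zpow_zero, one_def]
  | succ n ih => rw [zpow_add_one, ih, r_mul_r]; congr 1; show i * zmk n + i = i * (zmk n + 1); ring
  | pred n ih => rw [zpow_sub_one, ih]; rw [eq_comm, eq_mul_inv_iff_mul_eq, r_mul_r]
                 congr 1; show i * (zmk (-↑n) + (-1)) + i = i * zmk (-↑n); ring

lemma r_injective : Function.Injective (r : ZMod 0 → D) := by
  intro a b h; injection h

def fD : Gen 1 → D := fun x =>
  match x with
  | .inl (_, false) => sr 0
  | .inl (_, true) => sr 2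
  | .inr _ => sr 1

lemma hrels : ∀ w ∈ Gm.rels 1, FreeGroup.lift fD w = 1 := by
  rintro w (⟨i, t, rfl⟩ | rfl | ⟨i, j, hij, _⟩ | ⟨i, rfl⟩)
  · cases t <;> simp [fD, one_def, -r_zero]
  · simp [fD, one_def, -r_zero]
  · exact absurd hij (by omega)
  · simp [fD, inv_sr, one_def, -r_zero]; ring_nf

def φ : Gm 1 →* D := PresentedGroup.toGroup hrels

lemma φ_a' : φ (Gm.a' 0) = sr 0 := PresentedGroup.toGroup.of hrels
lemma φ_a'' : φ (Gm.a'' 0) = sr 2 := PresentedGroup.toGroup.of hrels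
lemma φ_am : φ (Gm.am 1) = sr 1 := PresentedGroup.toGroup.of hrels

lemma rel_one {w : FreeGroup (Gen 1)} (h : w ∈ Gm.rels 1) :
    PresentedGroup.mk (Gm.rels 1) w = 1 :=
  (QuotientGroup.eq_one_iff w).mpr (Subgroup.subset_normalClosure h)

lemma sq_a' : Gm.a' (0 : Fin 1) * Gm.a' 0 = 1 := by
  rw [show Gm.a' (0 : Fin 1) * Gm.a' 0
      = PresentedGroup.mk (Gm.rels 1) (of (.inl (0, false)) * of (.inl (0, false))) from
    (_root_.map_mul (PresentedGroup.mk (Gm.rels 1)) _ _).symm]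
  exact rel_one (Or.inl ⟨0, false, rfl⟩)

lemma sq_a'' : Gm.a'' (0 : Fin 1) * Gm.a'' 0 = 1 := by
  rw [show Gm.a'' (0 : Fin 1) * Gm.a'' 0
      = PresentedGroup.mk (Gm.rels 1) (of (.inl (0, true)) * of (.inl (0, true))) from
    (_root_.map_mul (PresentedGroup.mk (Gm.rels 1)) _ _).symm]
  exact rel_one (Or.inl ⟨0, true, rfl⟩)

lemma sq_am : Gm.am 1 * Gm.am 1 = 1 := by
  rw [show Gm.am 1 * Gm.am 1
      = PresentedGroup.mk (Gm.rels 1) (of (.inr ()) * of (.inr ())) from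
    (_root_.map_mul (PresentedGroup.mk (Gm.rels 1)) _ _).symm]
  exact rel_one (Or.inr (Or.inl rfl))

lemma comm_rel : Gm.a' (0 : Fin 1) * Gm.am 1 = Gm.am 1 * Gm.a'' 0 := by
  have h : Gm.a' (0 : Fin 1) * Gm.am 1 * (Gm.am 1 * Gm.a'' 0)⁻¹ = 1 := by
    rw [show Gm.a' (0 : Fin 1) * Gm.am 1 * (Gm.am 1 * Gm.a'' 0)⁻¹
        = PresentedGroup.mk (Gm.rels 1)
          (of (.inl (0, false)) * of (.inr ()) * (of (.inr ()) * of (.inl (0, true)))⁻¹) from by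
      simp only [_root_.map_mul, map_inv]; rfl]
    exact rel_one (Or.inr (Or.inr (Or.inr ⟨0, rfl⟩)))
  exact mul_inv_eq_one.mp h

lemma inv_a' : (Gm.a' (0 : Fin 1))⁻¹ = Gm.a' 0 := inv_eq_of_mul_eq_one_right sq_a'
lemma inv_am : (Gm.am 1)⁻¹ = Gm.am 1 := inv_eq_of_mul_eq_one_right sq_am

def t : Gm 1 := Gm.a' 0 * Gm.am 1

lemma conj_t : Gm.a' 0 * t * (Gm.a' (0 : Fin 1))⁻¹ = t⁻¹ := by
  rw [inv_a', t, mul_inv_rev, inv_a', inv_am]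
  rw [show Gm.a' (0 : Fin 1) * (Gm.a' 0 * Gm.am 1) * Gm.a' 0
      = Gm.a' 0 * Gm.a' 0 * (Gm.am 1 * Gm.a' 0) by group, sq_a', one_mul]

lemma conj_t_zpow (k : ℤ) : Gm.a' 0 * t ^ k * (Gm.a' (0 : Fin 1))⁻¹ = t ^ (-k) := by
  have h := map_zpow (MulAut.conj (Gm.a' (0 : Fin 1))) t k
  simp only [MulAut.conj_apply] at h
  rw [h, conj_t, inv_zpow, ← zpow_neg]

lemma t_zpow_mul_a' (k : ℤ) : t ^ k * Gm.a' 0 = Gm.a' 0 * t ^ (-k) := by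
  have h := conj_t_zpow (-k)
  rw [neg_neg] at h
  rw [← h, inv_a']
  rw [show Gm.a' (0 : Fin 1) * t ^ (-k) * Gm.a' 0 * Gm.a' 0
      = Gm.a' 0 * t ^ (-k) * (Gm.a' 0 * Gm.a' 0) by group, sq_a', mul_one]

def ψf : D → Gm 1 := fun x =>
  match x with
  | r i => t ^ zi i
  | sr i => Gm.a' 0 * t ^ zi i

lemma ψf_mul (x y : D) : ψf (x * y) = ψf x * ψf y := by
  rcases x with i | i <;> rcases y with j | j
  · show t ^ zi (i + j) = t ^ zi i * t ^ zi j
    rw [show zi (i + j) = zi i + zi j from rfl, zpow_add]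
  · show Gm.a' 0 * t ^ zi (j - i) = t ^ zi i * (Gm.a' 0 * t ^ zi j)
    rw [← mul_assoc, t_zpow_mul_a', show zi (j - i) = zi j - zi i from rfl,
      mul_assoc, ← zpow_add, sub_eq_neg_add]
  · show Gm.a' 0 * t ^ zi (i + j) = Gm.a' 0 * t ^ zi i * t ^ zi j
    rw [show zi (i + j) = zi i + zi j from rfl, zpow_add, mul_assoc]
  · show t ^ zi (j - i) = Gm.a' 0 * t ^ zi i * (Gm.a' 0 * t ^ zi j)
    rw [mul_assoc, ← mul_assoc (t ^ zi i), t_zpow_mul_a', ← mul_assoc, ← mul_assoc,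
      sq_a', one_mul, ← zpow_add, show zi (j - i) = zi j - zi i from rfl, sub_eq_neg_add]

def ψ : D →* Gm 1 := MonoidHom.mk' ψf ψf_mul

lemma ψ_r (i : ZMod 0) : ψ (r i) = t ^ zi i := rfl
lemma ψ_sr (i : ZMod 0) : ψ (sr i) = Gm.a' 0 * t ^ zi i := rfl

lemma φ_t : φ t = r 1 := by
  rw [t, _root_.map_mul, φ_a', φ_am]; simp

lemma left_inv : ψ.comp φ = MonoidHom.id (Gm 1) := by
  apply PresentedGroup.ext
  rintro (⟨i, _ | _⟩ | ⟨⟩)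
  · have : (i : Fin 1) = 0 := Subsingleton.elim _ _
    subst this
    show ψ (φ (Gm.a' 0)) = Gm.a' 0
    rw [φ_a', ψ_sr, show zi 0 = 0 from rfl, zpow_zero, mul_one]
  · have : (i : Fin 1) = 0 := Subsingleton.elim _ _
    subst this
    show ψ (φ (Gm.a'' 0)) = Gm.a'' 0
    rw [φ_a'', ψ_sr, show zi 2 = 2 from rfl]
    rw [show (2 : ℤ) = 1 + 1 from rfl, zpow_add, zpow_one, t]
    rw [show Gm.a' (0 : Fin 1) * (Gm.a' 0 * Gm.am 1 * (Gm.a' 0 * Gm.am 1))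
        = Gm.a' 0 * Gm.a' 0 * (Gm.am 1 * Gm.a' 0 * Gm.am 1) by group, sq_a', one_mul]
    have h : Gm.am 1 * (Gm.a' (0 : Fin 1) * Gm.am 1) = Gm.am 1 * (Gm.am 1 * Gm.a'' 0) := by
      rw [comm_rel]
    rw [mul_assoc, h, ← mul_assoc, sq_am, one_mul]
  · show ψ (φ (Gm.am 1)) = Gm.am 1
    rw [φ_am, ψ_sr, show zi 1 = 1 from rfl, zpow_one, t, ← mul_assoc, sq_a', one_mul]

lemma right_inv : φ.comp ψ = MonoidHom.id D := by
  ext x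
  rcases x with i | i
  · show φ (t ^ zi i) = r i
    rw [map_zpow, φ_t, r_zpow, one_mul, show zmk (zi i) = i from rfl]
  · show φ (Gm.a' 0 * t ^ zi i) = sr i
    rw [_root_.map_mul, map_zpow, φ_a', φ_t, r_zpow, one_mul,
      show zmk (zi i) = i from rfl, sr_mul_r, zero_add]

noncomputable def e : Gm 1 ≃* D := MonoidHom.toMulEquiv φ ψ left_inv right_inv

lemma e_apply (x : Gm 1) : e x = φ x := rfl

lemma e_gen : e (Gm.a' 0 * Gm.a'' 0) = r 2 := by
  rw [e_apply, _root_.map_mul, φ_a', φ_a'']; simp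

lemma zp_normal : (zpowers (r 2 : D)).Normal := by
  constructor
  rintro x ⟨k, rfl⟩ g
  rcases g with j | j
  · refine ⟨k, ?_⟩
    show (r 2 : D) ^ k = r j * (r 2 : D) ^ k * (r j)⁻¹
    rw [r_zpow, inv_r, r_mul_r, r_mul_r]
    congr 1; ring
  · refine ⟨-k, ?_⟩
    show (r 2 : D) ^ (-k) = sr j * (r 2 : D) ^ k * (sr j)⁻¹
    rw [r_zpow, r_zpow, inv_sr, sr_mul_r, sr_mul_sr]
    congr 1
    show 2 * zmk (-k) = j - (j + 2 * zmk k)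
    rw [show zmk (-k) = -zmk k from rfl]; ring

noncomputable def zEquiv : Multiplicative ℤ ≃* zpowers (r 2 : D) := by
  have hinj : Function.Injective (zpowersHom D (r 2)) := by
    intro a b hab
    simp only [zpowersHom_apply] at hab
    have h2 : (r 2 : D) ^ (a.toAdd) = (r 2) ^ (b.toAdd) := hab
    rw [r_zpow, r_zpow] at h2
    have h3 : (2 : ℤ) * a.toAdd = 2 * b.toAdd := r_injective h2
    have h4 : a.toAdd = b.toAdd := by omega
    exact Multiplicative.toAdd.injective h4
  have hr : (zpowersHom D (r 2)).range = zpowers (r 2 : D) := by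
    ext x
    constructor
    · rintro ⟨k, rfl⟩; exact ⟨k.toAdd, rfl⟩
    · rintro ⟨k, rfl⟩; exact ⟨Multiplicative.ofAdd k, rfl⟩
  exact (MonoidHom.ofInjective hinj).trans (MulEquiv.subgroupCongr hr)

def zm2 : ZMod 0 → ZMod 2 := fun i => ((zi i : ℤ) : ZMod 2)

lemma zm2_add (a b : ZMod 0) : zm2 (a + b) = zm2 a + zm2 b := by
  show ((zi a + zi b : ℤ) : ZMod 2) = _
  rw [Int.cast_add]; rfl

lemma zm2_sub (a b : ZMod 0) : zm2 (a - b) = zm2 b + zm2 a := by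
  show ((zi a - zi b : ℤ) : ZMod 2) = _
  rw [Int.cast_sub, sub_eq_add_neg, show -((zi b : ℤ) : ZMod 2) = ((zi b : ℤ) : ZMod 2) from
    CharTwo.neg_eq _, add_comm]
  rfl

def πf : D → Multiplicative (ZMod 2) × Multiplicative (ZMod 2) := fun x =>
  match x with
  | r i => (Multiplicative.ofAdd (zm2 i), Multiplicative.ofAdd 0)
  | sr i => (Multiplicative.ofAdd (zm2 i), Multiplicative.ofAdd 1)

lemma πf_mul (x y : D) : πf (x * y) = πf x * πf y := by
  rcases x with i | i <;> rcases y with j | j <;> refine Prod.ext ?_ ?_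
  · show Multiplicative.ofAdd (zm2 (i + j)) = Multiplicative.ofAdd (zm2 i) * Multiplicative.ofAdd (zm2 j)
    rw [← ofAdd_add, zm2_add]
  · rfl
  · show Multiplicative.ofAdd (zm2 (j - i)) = Multiplicative.ofAdd (zm2 i) * Multiplicative.ofAdd (zm2 j)
    rw [← ofAdd_add, zm2_sub]
  · rfl
  · show Multiplicative.ofAdd (zm2 (i + j)) = Multiplicative.ofAdd (zm2 i) * Multiplicative.ofAdd (zm2 j)
    rw [← ofAdd_add, zm2_add]
  · rfl
  · show Multiplicative.ofAdd (zm2 (j - i)) = Multiplicative.ofAdd (zm2 i) * Multiplicative.ofAdd (zm2 j)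
    rw [← ofAdd_add, zm2_sub]
  · show Multiplicative.ofAdd (0 : ZMod 2) = Multiplicative.ofAdd 1 * Multiplicative.ofAdd 1
    exact congrArg Multiplicative.ofAdd (by decide : (0 : ZMod 2) = 1 + 1)

def π : D →* Multiplicative (ZMod 2) × Multiplicative (ZMod 2) := MonoidHom.mk' πf πf_mul

lemma π_surj : Function.Surjective π := by
  rintro ⟨a, b⟩
  have key : ∀ x : ZMod 2, x = 0 ∨ x = 1 := by decide
  have ha : a = Multiplicative.ofAdd a.toAdd := rfl
  have hb : b = Multiplicative.ofAdd b.toAdd := rfl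
  have hz0 : zm2 0 = 0 := rfl
  have hz1 : zm2 1 = 1 := by show ((zi 1 : ℤ) : ZMod 2) = 1; rfl
  rcases key a.toAdd with h1 | h1 <;> rcases key b.toAdd with h2 | h2
  · exact ⟨r 0, by show πf (r 0) = (a, b); rw [ha, hb, h1, h2, πf]; rw [hz0]⟩
  · exact ⟨sr 0, by show πf (sr 0) = (a, b); rw [ha, hb, h1, h2, πf]; rw [hz0]⟩
  · exact ⟨r 1, by show πf (r 1) = (a, b); rw [ha, hb, h1, h2, πf]; rw [hz1]⟩
  · exact ⟨sr 1, by show πf (sr 1) = (a, b); rw [ha, hb, h1, h2, πf]; rw [hz1]⟩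

lemma ker_π : π.ker = zpowers (r 2 : D) := by
  ext x
  rcases x with i | i
  · simp only [MonoidHom.mem_ker]
    constructor
    · intro h
      have h1 : ((zi i : ℤ) : ZMod 2) = 0 := congrArg (fun p => (Prod.fst p).toAdd) h
      have h2 : (2 : ℤ) ∣ zi i := by
        rwa [ZMod.intCast_zmod_eq_zero_iff_dvd] at h1
      obtain ⟨k, hk⟩ := h2
      refine ⟨k, ?_⟩
      show (r 2 : D) ^ k = r i
      rw [r_zpow]; congr 1; exact congrArg zmk hk.symm
    · rintro ⟨k, hk⟩
      have hk' : (r 2 : D) ^ k = r i := hk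
      rw [r_zpow] at hk'
      have hik : i = 2 * zmk k := (r_injective hk').symm
      show πf (r i) = 1
      rw [hik]
      refine Prod.ext ?_ rfl
      show Multiplicative.ofAdd (zm2 (2 * zmk k)) = 1
      rw [show zm2 (2 * zmk k) = ((2 * k : ℤ) : ZMod 2) from rfl]
      have hz : ((2 * k : ℤ) : ZMod 2) = 0 := by
        rw [ZMod.intCast_zmod_eq_zero_iff_dvd]; exact Dvd.intro k rfl
      rw [hz]
      rfl
  · constructor
    · intro h
      exfalso
      exact one_ne_zero (congrArg (fun p => (Prod.snd p).toAdd) h : (1 : ZMod 2) = 0)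
    · rintro ⟨k, hk⟩
      have hk' : (r 2 : D) ^ k = sr i := hk
      rw [r_zpow] at hk'
      exact absurd hk' (by simp)

lemma index_zp : (zpowers (r 2 : D)).index = 4 := by
  rw [← ker_π, Subgroup.index_ker, MonoidHom.range_eq_top.mpr π_surj, Subgroup.card_top,
    Nat.card_prod, Nat.card_eq_fintype_card]
  decide

end Stmt2Aux

/-- In `G_1`, the subgroup generated by `a'_0 · a''_0` is normal, infinite
cyclic, and has index `4`. -/
theorem stmt_2 :
    (Subgroup.closure {Gm.a' (0 : Fin 1) * Gm.a'' (0 : Fin 1)}).Normal ∧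
    Nonempty ((Subgroup.closure {Gm.a' (0 : Fin 1) * Gm.a'' (0 : Fin 1)}) ≃*
      Multiplicative ℤ) ∧
    (Subgroup.closure {Gm.a' (0 : Fin 1) * Gm.a'' (0 : Fin 1)}).index = 4 := by
  open Stmt2Aux DihedralGroup Subgroup in
  set S := Subgroup.closure {Gm.a' (0 : Fin 1) * Gm.a'' (0 : Fin 1)} with hS
  have hmap : S.map (Stmt2Aux.e : Gm 1 →* Stmt2Aux.D) = Subgroup.zpowers (DihedralGroup.r 2) := by
    rw [hS, MonoidHom.map_closure, Set.image_singleton]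
    rw [show (Stmt2Aux.e : Gm 1 →* Stmt2Aux.D) (Gm.a' (0 : Fin 1) * Gm.a'' (0 : Fin 1))
        = DihedralGroup.r 2 from Stmt2Aux.e_gen]
    exact (Subgroup.zpowers_eq_closure _).symm
  have hinj : Function.Injective (Stmt2Aux.e : Gm 1 →* Stmt2Aux.D) := Stmt2Aux.e.injective
  have hsurj : Function.Surjective (Stmt2Aux.e : Gm 1 →* Stmt2Aux.D) := Stmt2Aux.e.surjective
  have hcomap : S = (Subgroup.zpowers (DihedralGroup.r 2)).comap
      (Stmt2Aux.e : Gm 1 →* Stmt2Aux.D) := by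
    rw [← hmap, Subgroup.comap_map_eq_self_of_injective hinj]
  refine ⟨?_, ⟨?_⟩, ?_⟩
  · rw [hcomap]; exact Stmt2Aux.zp_normal.comap _
  · exact ((Stmt2Aux.e.subgroupMap S).trans
      ((MulEquiv.subgroupCongr hmap).trans Stmt2Aux.zEquiv.symm))
  · rw [hcomap, Subgroup.index_comap_of_surjective _ hsurj, Stmt2Aux.index_zp]
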